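/- Let F be a Banach lattice and let (y_i) be a disjoint sequence of positive elements of F such that inf_i ‖y_i‖ > 0 and sup_j ‖∑_{i=1}^{j} y_i‖ < ∞. Then the closed sublattice of F generated by (y_i) is linearly lattice isomorphic and topologically isomorphic to c₀. -/

import Mathlib

open Filter Topology ZeroAtInfty

namespace ZeroAtInftyContinuousMap

variable {α : Type*} [TopologicalSpace α]

/-- Pointwise supremum on `C₀(α, ℝ)`. -/
noncomputable instance : Max C₀(α, ℝ) where
  max f g :=
    { toFun := fun x => f x ⊔ g x
      continuous_toFun := (map_continuous f).sup (map_continuous g)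
      zero_at_infty' := by
        simpa using (zero_at_infty f).sup_nhds (zero_at_infty g) }

/-- Pointwise infimum on `C₀(α, ℝ)`. -/
noncomputable instance : Min C₀(α, ℝ) where
  min f g :=
    { toFun := fun x => f x ⊓ g x
      continuous_toFun := (map_continuous f).inf (map_continuous g)
      zero_at_infty' := by
        simpa using (zero_at_infty f).inf_nhds (zero_at_infty g) }

/-- `C₀(α, ℝ)` with the pointwise order is a lattice; in particular `c₀ = C₀(ℕ, ℝ)` is the
Banach lattice of real sequences converging to `0` with coordinatewise order. -/
noncomputable instance : Lattice C₀(α, ℝ) :=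
  letI : LE C₀(α, ℝ) := ⟨fun f g => ⇑f ≤ ⇑g⟩
  letI : LT C₀(α, ℝ) := ⟨fun f g => ⇑f < ⇑g⟩
  DFunLike.coe_injective.lattice _ .rfl .rfl (fun _ _ => rfl) (fun _ _ => rfl)

end ZeroAtInftyContinuousMap

/-- The ordered-module class `OrderedSMul` of the older Mathlib (removed since), with its
original meaning. -/
class OrderedSMul (R M : Type*) [Semiring R] [PartialOrder R] [AddCommMonoid M] [PartialOrder M]
    [SMulWithZero R M] : Prop where
  protected smul_lt_smul_of_pos : ∀ {a b : M} {c : R}, a < b → 0 < c → c • a < c • b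
  protected lt_of_smul_lt_smul_of_pos : ∀ {a b : M} {c : R}, c • a < c • b → 0 < c → a < b


section Aux

variable {F : Type*} [NormedAddCommGroup F] [Lattice F] [IsOrderedAddMonoid F] [HasSolidNorm F]

lemma aux_inf_add_le (u v w : F) (hu : 0 ≤ u) (hv : 0 ≤ v) (hw : 0 ≤ w) :
    u ⊓ (v + w) ≤ u ⊓ v + u ⊓ w := by
  set z := u ⊓ (v + w) with hz
  have h1 : z - u ⊓ w ≤ u ⊓ v := by
    rw [hz, sub_inf]
    apply sup_le
    · exact le_trans (sub_nonpos.2 inf_le_left) (le_inf hu hv)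
    · exact le_inf (le_trans (sub_le_self _ hw) inf_le_left)
        (sub_le_iff_le_add.2 inf_le_right)
  calc z = (z - u ⊓ w) + u ⊓ w := by abel
    _ ≤ u ⊓ v + u ⊓ w := add_le_add_left h1 _

lemma aux_inf_sum_zero {ι : Type*} (u : F) (hu : 0 ≤ u) (s : Finset ι) (v : ι → F)
    (hv : ∀ i ∈ s, 0 ≤ v i) (h : ∀ i ∈ s, u ⊓ v i = 0) : u ⊓ ∑ i ∈ s, v i = 0 := by
  induction s using Finset.cons_induction with
  | empty => simp [inf_eq_right.2 hu]
  | cons a s ha ih =>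
    rw [Finset.sum_cons]
    have hsum : 0 ≤ ∑ i ∈ s, v i :=
      Finset.sum_nonneg fun i hi => hv i (Finset.mem_cons_of_mem hi)
    refine le_antisymm ?_ (le_inf hu (add_nonneg (hv a (Finset.mem_cons_self a s)) hsum))
    calc u ⊓ (v a + ∑ i ∈ s, v i)
        ≤ u ⊓ v a + u ⊓ ∑ i ∈ s, v i :=
          aux_inf_add_le u (v a) _ hu (hv a (Finset.mem_cons_self a s)) hsum
      _ = 0 := by
          rw [h a (Finset.mem_cons_self a s),
            ih (fun i hi => hv i (Finset.mem_cons_of_mem hi))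
              (fun i hi => h i (Finset.mem_cons_of_mem hi)), add_zero]

lemma aux_abs_le_abs_add (a b : F) (h : |a| ⊓ |b| = 0) : |a| ≤ |a + b| := by
  have h1 : |a| - |b| ≤ |a + b| := by
    have h0 := abs_abs_sub_abs_le a (-b)
    rw [sub_neg_eq_add, abs_neg] at h0
    exact le_trans (le_abs_self _) h0
  have h2 : |a| - |a| ⊓ |b| = (|a| - |a|) ⊔ (|a| - |b|) := sub_inf _ _ _
  rw [h, sub_zero, sub_self] at h2
  rw [h2]
  exact sup_le (abs_nonneg _) h1

lemma aux_abs_add_disjoint (a b : F) (h : |a| ⊓ |b| = 0) : |a + b| = |a| + |b| := by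
  refine le_antisymm (abs_add_le a b) ?_
  have h1 : |a| ≤ |a + b| := aux_abs_le_abs_add a b h
  have h2 : |b| ≤ |a + b| := by
    rw [add_comm]
    exact aux_abs_le_abs_add b a (by rwa [inf_comm])
  calc |a| + |b| = |a| ⊓ |b| + (|a| ⊔ |b|) := (inf_add_sup _ _).symm
    _ = |a| ⊔ |b| := by rw [h, zero_add]
    _ ≤ |a + b| := sup_le h1 h2

lemma aux_sup_eq [Module ℝ F] (u v : F) :
    u ⊔ v = u + (2⁻¹ : ℝ) • ((v - u) + |v - u|) := by
  have h2 : (u ⊔ v) + (u ⊔ v) = u + v + |v - u| := by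
    have h := two_nsmul_sup_eq_add_add_abs_sub u v
    rwa [two_nsmul] at h
  have h3 : (2⁻¹ : ℝ) • ((u ⊔ v) + (u ⊔ v)) = u ⊔ v := by
    rw [← two_smul ℝ (u ⊔ v), smul_smul]; norm_num
  calc u ⊔ v = (2⁻¹ : ℝ) • ((u ⊔ v) + (u ⊔ v)) := h3.symm
    _ = (2⁻¹ : ℝ) • (u + v + |v - u|) := by rw [h2]
    _ = u + (2⁻¹ : ℝ) • ((v - u) + |v - u|) := by module

end Aux

/-- Let `F` be a Banach lattice and `(yᵢ)` a disjoint sequence of positive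
elements with `inf_i ‖yᵢ‖ > 0` and uniformly bounded partial sums. Then the closed sublattice
of `F` generated by `(yᵢ)` is linearly lattice isomorphic and topologically isomorphic
to `c₀`. -/
theorem stmt13 (F : Type*) [NormedAddCommGroup F] [Lattice F] [IsOrderedAddMonoid F] [HasSolidNorm F]
    [NormedSpace ℝ F] [OrderedSMul ℝ F]
    [CompleteSpace F]
    (y : ℕ → F) (hpos : ∀ i, 0 ≤ y i) (hdisj : ∀ m i : ℕ, m ≠ i → y m ⊓ y i = 0)
    (hinf : ∃ c > (0 : ℝ), ∀ i, c ≤ ‖y i‖)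
    (hsum : ∃ M : ℝ, ∀ j : ℕ, ‖∑ i ∈ Finset.range j, y i‖ ≤ M) :
    ∃ S : C₀(ℕ, ℝ) →ₗ[ℝ] F,
      Function.Injective S ∧
      (∀ f : C₀(ℕ, ℝ), S |f| = |S f|) ∧
      Set.range S =
        ⋂₀ {A : Set F | IsClosed A ∧ Set.range y ⊆ A ∧
          ∃ H : Submodule ℝ F, (H : Set F) = A ∧ ∀ a ∈ H, ∀ b ∈ H, a ⊔ b ∈ H ∧ a ⊓ b ∈ H} ∧
      ∃ C₁ > (0 : ℝ), ∃ C₂ > (0 : ℝ),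
        ∀ f : C₀(ℕ, ℝ), C₁ * ‖f‖ ≤ ‖S f‖ ∧ ‖S f‖ ≤ C₂ * ‖f‖ := by
  haveI : PosSMulMono ℝ F := ⟨by
    intro r hr a b hab
    rcases hab.lt_or_eq with h | h
    · rcases hr.lt_or_eq with hr' | hr'
      · exact (OrderedSMul.smul_lt_smul_of_pos h hr').le
      · rw [← hr']; simp
    · rw [h]⟩
  obtain ⟨c, hc, hcy⟩ := hinf
  obtain ⟨M, hM⟩ := hsum
  have hM0 : 0 ≤ M := le_trans (by simp) (hM 0)
  -- abs of scalar multiples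
  have hsm : ∀ (r : ℝ) (i : ℕ), |r • y i| = |r| • y i := by
    intro r i
    rcases le_or_gt 0 r with hr | hr
    · rw [abs_of_nonneg (smul_nonneg hr (hpos i)), abs_of_nonneg hr]
    · rw [abs_of_nonpos (smul_nonpos_of_nonpos_of_nonneg hr.le (hpos i)),
        abs_of_neg hr, neg_smul]
  -- disjointness of scalar multiples
  have hdis2 : ∀ (r s : ℝ) (m i : ℕ), m ≠ i → (|r| • y m) ⊓ (|s| • y i) = 0 := by
    intro r s m i hmi
    set t : ℝ := max |r| |s| + 1 with ht
    have ht0 : 0 < t := lt_of_lt_of_le (by positivity) (le_refl _)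
    set z := (|r| • y m) ⊓ (|s| • y i) with hzdef
    have hz0 : 0 ≤ z := le_inf (smul_nonneg (abs_nonneg r) (hpos m))
      (smul_nonneg (abs_nonneg s) (hpos i))
    have hle : ∀ (a : ℝ) (j : ℕ), |a| ≤ t → |a| • y j ≤ t • y j := by
      intro a j hat
      have : 0 ≤ (t - |a|) • y j := smul_nonneg (by linarith) (hpos j)
      calc |a| • y j = t • y j - (t - |a|) • y j := by rw [sub_smul]; abel
        _ ≤ t • y j := sub_le_self _ this
    have hzm : t⁻¹ • z ≤ y m := by
      have h1 : z ≤ t • y m := le_trans inf_le_left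
        (hle r m (by rw [ht]; exact le_add_of_le_of_nonneg (le_max_left _ _) zero_le_one))
      calc t⁻¹ • z ≤ t⁻¹ • (t • y m) :=
            smul_le_smul_of_nonneg_left h1 (inv_nonneg.2 ht0.le)
        _ = y m := by rw [smul_smul, inv_mul_cancel₀ ht0.ne', one_smul]
    have hzi : t⁻¹ • z ≤ y i := by
      have h1 : z ≤ t • y i := le_trans inf_le_right
        (hle s i (by rw [ht]; exact le_add_of_le_of_nonneg (le_max_right _ _) zero_le_one))
      calc t⁻¹ • z ≤ t⁻¹ • (t • y i) :=
            smul_le_smul_of_nonneg_left h1 (inv_nonneg.2 ht0.le)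
        _ = y i := by rw [smul_smul, inv_mul_cancel₀ ht0.ne', one_smul]
    have hz : t⁻¹ • z ≤ 0 := by
      rw [← hdisj m i hmi]; exact le_inf hzm hzi
    have hz' : t⁻¹ • z = 0 :=
      le_antisymm hz (smul_nonneg (inv_nonneg.2 ht0.le) hz0)
    have := congrArg (fun w => t • w) hz'
    simpa [smul_smul, mul_inv_cancel₀ ht0.ne'] using this
  -- abs of partial sums
  have habs_sum : ∀ (f : ℕ → ℝ) (s : Finset ℕ),
      |∑ i ∈ s, f i • y i| = ∑ i ∈ s, |f i| • y i := by
    intro f s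
    induction s using Finset.cons_induction with
    | empty => simp
    | cons a s ha ih =>
      rw [Finset.sum_cons, Finset.sum_cons, ← ih, aux_abs_add_disjoint, hsm]
      rw [hsm, ih]
      exact aux_inf_sum_zero _ (smul_nonneg (abs_nonneg _) (hpos a)) s _
        (fun i _ => smul_nonneg (abs_nonneg _) (hpos i))
        (fun i hi => hdis2 (f a) (f i) a i (fun h => ha (h ▸ hi)))
  -- norm bound for partial sums
  have hbound : ∀ (f : ℕ → ℝ) (s : Finset ℕ) (ε : ℝ), 0 ≤ ε →
      (∀ i ∈ s, |f i| ≤ ε) → ‖∑ i ∈ s, f i • y i‖ ≤ ε * M := by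
    intro f s ε hε hfs
    obtain ⟨n, hn⟩ := s.exists_nat_subset_range
    have h1 : |∑ i ∈ s, f i • y i| ≤ ε • ∑ i ∈ Finset.range n, y i := by
      rw [habs_sum]
      calc ∑ i ∈ s, |f i| • y i ≤ ∑ i ∈ s, ε • y i := by
            refine Finset.sum_le_sum fun i hi => ?_
            have : 0 ≤ (ε - |f i|) • y i := smul_nonneg (by linarith [hfs i hi]) (hpos i)
            calc |f i| • y i = ε • y i - (ε - |f i|) • y i := by rw [sub_smul]; abel
              _ ≤ ε • y i := sub_le_self _ this
        _ = ε • ∑ i ∈ s, y i := (Finset.smul_sum).symm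
        _ ≤ ε • ∑ i ∈ Finset.range n, y i := by
            have h4 : ∑ i ∈ s, y i ≤ ∑ i ∈ Finset.range n, y i :=
              Finset.sum_le_sum_of_subset_of_nonneg hn fun i _ _ => hpos i
            have h5 : 0 ≤ ε • ∑ i ∈ Finset.range n, y i - ε • ∑ i ∈ s, y i := by
              rw [← smul_sub]
              exact smul_nonneg hε (sub_nonneg.2 h4)
            exact sub_nonneg.1 h5
    have h2 : 0 ≤ ε • ∑ i ∈ Finset.range n, y i :=
      smul_nonneg hε (Finset.sum_nonneg fun i _ => hpos i)
    have h3 : ‖∑ i ∈ s, f i • y i‖ ≤ ‖ε • ∑ i ∈ Finset.range n, y i‖ := by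
      apply HasSolidNorm.solid
      rwa [abs_of_nonneg h2]
    calc ‖∑ i ∈ s, f i • y i‖ ≤ ‖ε • ∑ i ∈ Finset.range n, y i‖ := h3
      _ = ε * ‖∑ i ∈ Finset.range n, y i‖ := by
          rw [norm_smul, Real.norm_eq_abs, abs_of_nonneg hε]
      _ ≤ ε * M := mul_le_mul_of_nonneg_left (hM n) hε
  -- coordinate bound
  have hcoord : ∀ (f : C₀(ℕ, ℝ)) (i : ℕ), |f i| ≤ ‖f‖ := by
    intro f i
    rw [← Real.norm_eq_abs, ← ZeroAtInftyContinuousMap.norm_toBCF_eq_norm]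
    exact BoundedContinuousFunction.norm_coe_le_norm f.toBCF i
  -- summability
  have hsummable : ∀ f : C₀(ℕ, ℝ), Summable (fun i => f i • y i) := by
    intro f
    rw [summable_iff_vanishing]
    intro e he
    obtain ⟨ε, hε, hball⟩ := Metric.mem_nhds_iff.1 he
    have htend : Tendsto f atTop (𝓝 (0 : ℝ)) := by
      have := zero_at_infty f
      rwa [cocompact_eq_atTop (α := ℕ)] at this
    have hδ : (0:ℝ) < ε / (2 * (M + 1)) := by positivity
    obtain ⟨n, hn⟩ := (Metric.tendsto_atTop.1 htend _ hδ)
    refine ⟨Finset.range n, fun t hts => ?_⟩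
    apply hball
    rw [Metric.mem_ball, dist_zero_right]
    have hb : ‖∑ i ∈ t, f i • y i‖ ≤ (ε / (2 * (M + 1))) * M := by
      apply hbound f t _ hδ.le
      intro i hi
      have : n ≤ i := by
        by_contra h
        exact (Finset.disjoint_left.1 hts) hi (Finset.mem_range.2 (not_le.1 h))
      have := hn i this
      rw [Real.dist_eq, sub_zero] at this
      exact this.le
    have : (ε / (2 * (M + 1))) * M < ε := by
      rw [div_mul_eq_mul_div, div_lt_iff₀ (by positivity)]
      nlinarith
    linarith
  classical
  -- the linear map
  have hadd : ∀ f g : C₀(ℕ, ℝ),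
      (∑' i, (f + g) i • y i) = (∑' i, f i • y i) + ∑' i, g i • y i := by
    intro f g
    rw [← Summable.tsum_add (hsummable f) (hsummable g)]
    exact tsum_congr fun i => by simp [add_smul]
  have hsmul : ∀ (r : ℝ) (f : C₀(ℕ, ℝ)),
      (∑' i, (r • f) i • y i) = r • ∑' i, f i • y i := by
    intro r f
    rw [← tsum_const_smul'' r]
    exact tsum_congr fun i => by simp [mul_smul]
  refine ⟨{ toFun := fun f => ∑' i, f i • y i
            map_add' := hadd
            map_smul' := hsmul }, ?_⟩
  set S : C₀(ℕ, ℝ) →ₗ[ℝ] F :=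
    { toFun := fun f => ∑' i, f i • y i
      map_add' := hadd
      map_smul' := hsmul } with hSdef
  have hS_hasSum : ∀ f : C₀(ℕ, ℝ), HasSum (fun i => f i • y i) (S f) :=
    fun f => (hsummable f).hasSum
  -- S of abs
  have habsS : ∀ f : C₀(ℕ, ℝ), HasSum (fun i => |f i| • y i) |S f| := by
    intro f
    have habs_cont : Continuous (fun x : F => |x|) := by
      show Continuous fun x : F => x ⊔ -x
      exact continuous_id.sup continuous_neg
    have h1 : Tendsto (fun s : Finset ℕ => |∑ i ∈ s, f i • y i|) atTop (𝓝 |S f|) :=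
      ((habs_cont.tendsto _).comp (hS_hasSum f))
    have h2 : (fun s : Finset ℕ => |∑ i ∈ s, f i • y i|)
        = fun s : Finset ℕ => ∑ i ∈ s, |f i| • y i := funext fun s => habs_sum f s
    rw [h2] at h1
    exact h1
  have hSabs : ∀ f : C₀(ℕ, ℝ), S |f| = |S f| := by
    intro f
    have h1 : HasSum (fun i => |f| i • y i) |S f| := by
      have : (fun i => |f| i • y i) = fun i => |f i| • y i := by
        funext i; rfl
      rw [this]
      exact habsS f
    exact h1.tsum_eq
  -- lower bound
  have hlow : ∀ (f : C₀(ℕ, ℝ)), c * ‖f‖ ≤ ‖S f‖ := by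
    intro f
    have key : ∀ j : ℕ, c * |f j| ≤ ‖S f‖ := by
      intro j
      have h1 : |f j| • y j ≤ |S f| :=
        le_hasSum (habsS f) j fun i _ => smul_nonneg (abs_nonneg _) (hpos i)
      have h2 : ‖|f j| • y j‖ ≤ ‖S f‖ := by
        rw [← norm_abs_eq_norm (S f)]
        apply HasSolidNorm.solid
        rwa [abs_of_nonneg (smul_nonneg (abs_nonneg _) (hpos j)),
          abs_of_nonneg (abs_nonneg (S f))]
      have h3 : ‖|f j| • y j‖ = |f j| * ‖y j‖ := by
        rw [norm_smul, Real.norm_eq_abs, abs_abs]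
      calc c * |f j| ≤ |f j| * ‖y j‖ := by
            rw [mul_comm]; exact mul_le_mul_of_nonneg_left (hcy j) (abs_nonneg _)
        _ ≤ ‖S f‖ := h3 ▸ h2
    have hfle : ‖f‖ ≤ ‖S f‖ / c := by
      rw [← ZeroAtInftyContinuousMap.norm_toBCF_eq_norm]
      apply BoundedContinuousFunction.norm_le (div_nonneg (norm_nonneg _) hc.le) |>.2
      intro i
      rw [le_div_iff₀ hc]
      calc ‖f.toBCF i‖ * c = c * |f i| := by
            rw [mul_comm, Real.norm_eq_abs]; rfl
        _ ≤ ‖S f‖ := key i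
    calc c * ‖f‖ ≤ c * (‖S f‖ / c) := mul_le_mul_of_nonneg_left hfle hc.le
      _ = ‖S f‖ := by field_simp
  -- upper bound
  have hup : ∀ (f : C₀(ℕ, ℝ)), ‖S f‖ ≤ (M + 1) * ‖f‖ := by
    intro f
    have h1 : Tendsto (fun s : Finset ℕ => ‖∑ i ∈ s, f i • y i‖) atTop (𝓝 ‖S f‖) :=
      (continuous_norm.tendsto _).comp (hS_hasSum f)
    have h2 : ‖S f‖ ≤ ‖f‖ * M :=
      le_of_tendsto h1 (Filter.Eventually.of_forall fun s =>
        hbound f s ‖f‖ (norm_nonneg f) fun i _ => hcoord f i)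
    calc ‖S f‖ ≤ ‖f‖ * M := h2
      _ ≤ (M + 1) * ‖f‖ := by nlinarith [norm_nonneg f]
  -- injectivity
  have hinj : Function.Injective S := by
    intro f g hfg
    have h1 : S (f - g) = 0 := by rw [map_sub, hfg, sub_self]
    have h2 : c * ‖f - g‖ ≤ 0 := by
      have := hlow (f - g)
      rwa [h1, norm_zero] at this
    have h3 : ‖f - g‖ = 0 :=
      le_antisymm (by nlinarith [norm_nonneg (f - g)]) (norm_nonneg _)
    exact sub_eq_zero.1 (norm_eq_zero.1 h3)
  -- continuity and closed range
  set Sc : C₀(ℕ, ℝ) →L[ℝ] F := LinearMap.mkContinuous S (M + 1) hup with hScdef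
  have hScS : ∀ f, Sc f = S f := fun f => rfl
  have hanti : AntilipschitzWith (c⁻¹).toNNReal Sc := by
    apply ContinuousLinearMap.antilipschitz_of_bound
    intro f
    rw [Real.coe_toNNReal _ (inv_nonneg.2 hc.le), ← div_eq_inv_mul, le_div_iff₀ hc, hScS]
    calc ‖f‖ * c = c * ‖f‖ := mul_comm _ _
      _ ≤ ‖S f‖ := hlow f
  have hclosed : IsClosed (Set.range S) := by
    have h1 : IsClosed (Set.range Sc) := hanti.isClosed_range Sc.uniformContinuous
    have h2 : Set.range (Sc : C₀(ℕ, ℝ) → F) = Set.range S := rfl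
    rwa [h2] at h1
  -- basis vectors
  have hedef : ∀ i : ℕ, ∃ e : C₀(ℕ, ℝ), (∀ n, e n = if n = i then 1 else 0) := by
    intro i
    refine ⟨⟨⟨fun n => if n = i then 1 else 0, continuous_of_discreteTopology⟩, ?_⟩,
      fun n => rfl⟩
    rw [cocompact_eq_atTop (α := ℕ)]
    apply Tendsto.congr' _ tendsto_const_nhds
    filter_upwards [eventually_gt_atTop i] with n hn
    exact (if_neg (by omega)).symm
  have hy_in_range : ∀ i : ℕ, y i ∈ Set.range S := by
    intro i
    obtain ⟨e, he⟩ := hedef i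
    refine ⟨e, ?_⟩
    show (∑' n, e n • y n) = y i
    rw [tsum_eq_single i]
    · rw [he i, if_pos rfl, one_smul]
    · intro n hn
      rw [he n, if_neg hn, zero_smul]
  -- sup identity
  have hsupS : ∀ f g : C₀(ℕ, ℝ), (S f) ⊔ (S g) ∈ Set.range S := by
    intro f g
    refine ⟨f + (2⁻¹ : ℝ) • ((g - f) + |g - f|), ?_⟩
    rw [map_add, map_smul, map_add, map_sub, hSabs, map_sub]
    exact (aux_sup_eq (S f) (S g)).symm
  -- range equality
  have hrange : Set.range S =
      ⋂₀ {A : Set F | IsClosed A ∧ Set.range y ⊆ A ∧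
        ∃ H : Submodule ℝ F, (H : Set F) = A ∧ ∀ a ∈ H, ∀ b ∈ H, a ⊔ b ∈ H ∧ a ⊓ b ∈ H} := by
    apply le_antisymm
    · -- range S ⊆ every A
      rintro x ⟨f, rfl⟩ A ⟨hAc, hAy, H, hHA, _⟩
      have hpart : ∀ n : ℕ, ∑ i ∈ Finset.range n, f i • y i ∈ H := by
        intro n
        apply Submodule.sum_mem
        intro i _
        apply Submodule.smul_mem
        have : y i ∈ A := hAy ⟨i, rfl⟩
        rwa [← hHA] at this
      have htnd : Tendsto (fun n => ∑ i ∈ Finset.range n, f i • y i) atTop (𝓝 (S f)) :=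
        (hS_hasSum f).tendsto_sum_nat
      exact hAc.mem_of_tendsto htnd
        (Filter.Eventually.of_forall fun n => hHA ▸ hpart n)
    · -- ⋂ ⊆ range S since range S is a member
      apply Set.sInter_subset_of_mem
      refine ⟨hclosed, ?_, ?_⟩
      · rintro _ ⟨i, rfl⟩
        exact hy_in_range i
      · refine ⟨LinearMap.range S, ?_, ?_⟩
        · ext x
          simp [LinearMap.mem_range]
        · rintro a ha b hb
          obtain ⟨f, rfl⟩ := ha
          obtain ⟨g, rfl⟩ := hb
          have hsup : S f ⊔ S g ∈ LinearMap.range S := by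
            obtain ⟨h, hh⟩ := hsupS f g
            exact ⟨h, hh⟩
          refine ⟨hsup, ?_⟩
          have hid : S f ⊓ S g = S f + S g - (S f ⊔ S g) := by
            have := inf_add_sup (S f) (S g)
            rw [← this]; abel
          rw [hid]
          exact sub_mem (add_mem ⟨f, rfl⟩ ⟨g, rfl⟩) hsup
  exact ⟨hinj, hSabs, hrange, c, hc, M + 1, by linarith, fun f => ⟨hlow f, hup f⟩⟩
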